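/- Let Q ∈ C^{N×N} be Hermitian, a_1,…,a_T ∈ C^N, and suppose the block matrix [[Q, A],[A^H, I_T]] is positive semidefinite, where A = [a_1 … a_T] ∈ C^{N×T}. If moreover Q satisfies ⟨Θ_q, Q⟩ = 1_{q=0} for q = -N+1,…,N-1, then Σ_{i=1}^T |f(θ)^H a_i|² ≤ 1 for all θ ∈ (0,π). -/

import Mathlib

open Complex Finset Matrix ComplexOrder

noncomputable section

/-- Matrix inner product `⟨A,B⟩ = Σ_{i,l} A_{i,l} conj (B_{i,l})`. -/
def minner {α β : Type*} [Fintype α] [Fintype β] (A B : Matrix α β ℂ) : ℂ :=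
  ∑ i, ∑ l, A i l * (starRingEnd ℂ) (B i l)

/-- Elementary Toeplitz matrix `Θ_q`: ones on the `q`-th diagonal (`l - i = q`). -/
def Theta (N : ℕ) (q : ℤ) : Matrix (Fin N) (Fin N) ℂ :=
  fun i l => if (l.val : ℤ) - (i.val : ℤ) = q then 1 else 0

/-- `f(θ) ∈ ℂ^N` with `k`-th entry `e^{i 2π (k-1) cos θ}`. -/
def fvec (N : ℕ) (θ : ℝ) : Fin N → ℂ :=
  fun k => Complex.exp (Complex.I * (2 * (Real.pi : ℂ) * (k.val : ℂ) * (Real.cos θ : ℂ)))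

/-- If the block matrix `[[Q, A],[Aᴴ, I]]` is PSD and `Q` satisfies the elementary
Toeplitz trace constraints, then `Σ_i |f(θ)^H a_i|² ≤ 1` for all `θ ∈ (0,π)`. -/
theorem bounded_dual_polynomial {N T : ℕ} (Q : Matrix (Fin N) (Fin N) ℂ)
    (A : Matrix (Fin N) (Fin T) ℂ) (hQ : Q.IsHermitian)
    (hpsd : (Matrix.fromBlocks Q A Aᴴ (1 : Matrix (Fin T) (Fin T) ℂ)).PosSemidef)
    (htr : ∀ q : ℤ, -((N : ℤ) - 1) ≤ q → q ≤ (N : ℤ) - 1 →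
      minner (Theta N q) Q = if q = 0 then 1 else 0) :
    ∀ θ ∈ Set.Ioo (0 : ℝ) Real.pi,
      ∑ i : Fin T, ‖star (fvec N θ) ⬝ᵥ (fun n => A n i)‖ ^ 2 ≤ 1 := by

  intro θ _
  classical
  set f : Fin N → ℂ := fvec N θ with hf
  -- Step A: from PSD, 0 ≤ f^H Q f - f^H A Aᴴ f
  have key : (0:ℂ) ≤ star f ⬝ᵥ Q.mulVec f - star f ⬝ᵥ A.mulVec (Aᴴ.mulVec f) := by
    have key := hpsd.dotProduct_mulVec_nonneg (Sum.elim f (-(Aᴴ.mulVec f)))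
    have hstar : star (Sum.elim f (-(Aᴴ.mulVec f)))
        = Sum.elim (star f) (star (-(Aᴴ.mulVec f))) := by
      funext i; cases i <;> simp
    rw [hstar, Matrix.fromBlocks_mulVec, Matrix.one_mulVec,
      sumElim_dotProduct_sumElim] at key
    simpa [Matrix.mulVec_neg, sub_eq_add_neg] using key
  -- Step B: f^H A Aᴴ f = Σ_i normSq (f^H a_i)
  have hB : star f ⬝ᵥ A.mulVec (Aᴴ.mulVec f)
      = ∑ i : Fin T, (Complex.normSq (star f ⬝ᵥ (fun n => A n i)) : ℂ) := by
    rw [Matrix.dotProduct_mulVec]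
    apply Finset.sum_congr rfl
    intro i _
    have h1 : (star f ᵥ* A) i = star f ⬝ᵥ (fun n => A n i) := by
      simp [Matrix.vecMul, dotProduct]
    have h2 : (Aᴴ.mulVec f) i = (starRingEnd ℂ) (star f ⬝ᵥ (fun n => A n i)) := by
      simp [Matrix.mulVec, dotProduct, Matrix.conjTranspose_apply, mul_comm]
    rw [h1, h2, Complex.mul_conj]
  -- Step C: (f^H Q f).re ≤ 1 from the trace constraints
  have hC : (star f ⬝ᵥ Q.mulVec f).re ≤ 1 := by
    set e : ℤ → ℂ := fun q =>
      Complex.exp (Complex.I * (2 * (Real.pi : ℂ) * (q : ℂ) * (Real.cos θ : ℂ))) with he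
    have hconj : ∀ n m : Fin N, (starRingEnd ℂ) (fvec N θ n) * fvec N θ m
        = e ((m.val : ℤ) - (n.val : ℤ)) := by
      intro n m
      simp only [fvec, he, ← Complex.exp_conj, ← Complex.exp_add, _root_.map_mul,
        Complex.conj_I, Complex.conj_ofReal, map_ofNat, map_natCast]
      congr 1
      push_cast
      ring
    set s : Finset ℤ := Finset.Icc (-((N : ℤ) - 1)) ((N : ℤ) - 1) with hs
    have hmem : ∀ n m : Fin N, ((m.val : ℤ) - (n.val : ℤ)) ∈ s := by
      intro n m
      have h1 := n.isLt; have h2 := m.isLt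
      simp only [hs, Finset.mem_Icc]
      omega
    have hS : ∀ q ∈ s, (∑ n : Fin N, ∑ m : Fin N,
        (if ((m.val : ℤ) - (n.val : ℤ)) = q then Q n m else 0)) = if q = 0 then 1 else 0 := by
      intro q hq
      simp only [hs, Finset.mem_Icc] at hq
      have h := htr q hq.1 hq.2
      have := congrArg (starRingEnd ℂ) h
      simp only [minner, Theta, map_sum, _root_.map_mul] at this
      simpa [apply_ite (starRingEnd ℂ), starRingEnd_self_apply] using this
    have hV : star f ⬝ᵥ Q.mulVec f = if (0:ℤ) ∈ s then 1 else 0 := by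
      have h0 : star f ⬝ᵥ Q.mulVec f
          = ∑ n : Fin N, ∑ m : Fin N, e ((m.val : ℤ) - (n.val : ℤ)) * Q n m := by
        simp only [hf, dotProduct, Matrix.mulVec, Pi.star_apply, Finset.mul_sum]
        refine Finset.sum_congr rfl fun n _ => Finset.sum_congr rfl fun m _ => ?_
        rw [show star (fvec N θ n) * (Q n m * fvec N θ m)
            = ((starRingEnd ℂ) (fvec N θ n) * fvec N θ m) * Q n m by
          simp [RingHom.id_apply]; ring]
        rw [hconj]
      rw [h0]
      have step : ∀ n m : Fin N, e ((m.val : ℤ) - (n.val : ℤ)) * Q n m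
          = ∑ q ∈ s, (if ((m.val : ℤ) - (n.val : ℤ)) = q then e q * Q n m else 0) := by
        intro n m
        rw [Finset.sum_ite_eq (s) ((m.val : ℤ) - (n.val : ℤ)) (fun q => e q * Q n m)]
        simp [hmem n m]
      calc (∑ n : Fin N, ∑ m : Fin N, e ((m.val : ℤ) - (n.val : ℤ)) * Q n m)
          = ∑ n : Fin N, ∑ m : Fin N, ∑ q ∈ s,
              (if ((m.val : ℤ) - (n.val : ℤ)) = q then e q * Q n m else 0) := by
            refine Finset.sum_congr rfl fun n _ => Finset.sum_congr rfl fun m _ => step n m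
        _ = ∑ n : Fin N, ∑ q ∈ s, ∑ m : Fin N,
              (if ((m.val : ℤ) - (n.val : ℤ)) = q then e q * Q n m else 0) :=
            Finset.sum_congr rfl fun n _ => Finset.sum_comm
        _ = ∑ q ∈ s, ∑ n : Fin N, ∑ m : Fin N,
              (if ((m.val : ℤ) - (n.val : ℤ)) = q then e q * Q n m else 0) :=
            Finset.sum_comm
        _ = ∑ q ∈ s, e q * ∑ n : Fin N, ∑ m : Fin N,
              (if ((m.val : ℤ) - (n.val : ℤ)) = q then Q n m else 0) := by
            refine Finset.sum_congr rfl fun q _ => ?_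
            simp only [Finset.mul_sum, mul_ite, mul_zero]
        _ = ∑ q ∈ s, e q * (if q = 0 then 1 else 0) := by
            refine Finset.sum_congr rfl fun q hq => by rw [hS q hq]
        _ = ∑ q ∈ s, (if q = (0:ℤ) then e q else 0) := by
            refine Finset.sum_congr rfl fun q _ => by split <;> simp
        _ = if (0:ℤ) ∈ s then e 0 else 0 := Finset.sum_ite_eq' s 0 e
        _ = if (0:ℤ) ∈ s then 1 else 0 := by split <;> simp [he]
    rw [hV]
    split <;> simp
  -- Combine
  rw [hB] at key
  rw [Complex.le_def] at key
  have hre := key.1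
  simp only [Complex.sub_re, Complex.zero_re, Complex.re_sum, Complex.ofReal_re] at hre
  have : ∑ i : Fin T, ‖star (fvec N θ) ⬝ᵥ (fun n => A n i)‖ ^ 2
      = ∑ i : Fin T, Complex.normSq (star f ⬝ᵥ (fun n => A n i)) := by
    refine Finset.sum_congr rfl fun i _ => ?_
    rw [hf, Complex.sq_norm]
  rw [this]
  linarith [hC]
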